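/- Let n ≥ 1, let S = {ξ ∈ ℝⁿ : |ξ| = 1} be the unit sphere, and let μ be a finite nonnegative Borel measure on S. Then the linear span of the set of vectors { ∫_S ξ ψ(ξ) dμ(ξ) : ψ ∈ C(S, ℝ) } coincides with the linear span of the support of μ. -/

import Mathlib

open MeasureTheory

/-- For a finite nonnegative Borel measure `μ` on the unit sphere
`S ⊆ ℝⁿ`, the linear span of the vectors `∫_S ξ ψ(ξ) dμ(ξ)`, `ψ ∈ C(S, ℝ)`,
coincides with the linear span of the support of `μ`. -/
theorem span_moment_vectors_eq_span_support
    (n : ℕ) (hn : 1 ≤ n)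
    (μ : Measure (Metric.sphere (0 : EuclideanSpace ℝ (Fin n)) 1)) [IsFiniteMeasure μ] :
    Submodule.span ℝ
        {v : EuclideanSpace ℝ (Fin n) |
          ∃ ψ : C(Metric.sphere (0 : EuclideanSpace ℝ (Fin n)) 1, ℝ),
            v = ∫ ξ, ψ ξ • (ξ : EuclideanSpace ℝ (Fin n)) ∂μ} =
      Submodule.span ℝ
        ((fun ξ : Metric.sphere (0 : EuclideanSpace ℝ (Fin n)) 1 =>
            (ξ : EuclideanSpace ℝ (Fin n))) ''
          {ξ : Metric.sphere (0 : EuclideanSpace ℝ (Fin n)) 1 |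
            ∀ U : Set (Metric.sphere (0 : EuclideanSpace ℝ (Fin n)) 1),
              IsOpen U → ξ ∈ U → 0 < μ U}) := by
  classical
  haveI : IsFiniteMeasureOnCompacts μ := ⟨fun K _ => measure_lt_top μ K⟩
  have hint : ∀ ψ : C(Metric.sphere (0 : EuclideanSpace ℝ (Fin n)) 1, ℝ),
      Integrable (fun ξ : Metric.sphere (0 : EuclideanSpace ℝ (Fin n)) 1 =>
        ψ ξ • (ξ : EuclideanSpace ℝ (Fin n))) μ :=
    fun ψ => Continuous.integrable_of_hasCompactSupport
      (ψ.continuous.smul continuous_subtype_val) isClosed_closure.isCompact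
  have hintR : ∀ ψ : C(Metric.sphere (0 : EuclideanSpace ℝ (Fin n)) 1, ℝ),
      Integrable (fun ξ => ψ ξ) μ :=
    fun ψ => Continuous.integrable_of_hasCompactSupport ψ.continuous
      isClosed_closure.isCompact
  set T : Set (Metric.sphere (0 : EuclideanSpace ℝ (Fin n)) 1) :=
    {ξ | ∀ U, IsOpen U → ξ ∈ U → 0 < μ U} with hT
  have hae : ∀ᵐ ξ ∂μ, ξ ∈ T := by
    rw [ae_iff]
    have hsub : {ξ : Metric.sphere (0 : EuclideanSpace ℝ (Fin n)) 1 | ¬ ξ ∈ T} ⊆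
        ⋃₀ {U : Set (Metric.sphere (0 : EuclideanSpace ℝ (Fin n)) 1) | IsOpen U ∧ μ U = 0} := by
      intro ξ hξ
      simp only [hT, Set.mem_setOf_eq, not_forall] at hξ
      obtain ⟨U, hU, hmem, hpos⟩ := hξ
      exact ⟨U, ⟨hU, by simpa using hpos⟩, hmem⟩
    refine measure_mono_null hsub ?_
    obtain ⟨Ts, hcount, hsubS, heq⟩ :=
      TopologicalSpace.isOpen_sUnion_countable
        {U : Set (Metric.sphere (0 : EuclideanSpace ℝ (Fin n)) 1) | IsOpen U ∧ μ U = 0}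
        (fun U hU => hU.1)
    rw [← heq]
    exact (measure_sUnion_null_iff hcount).2 fun s hs => (hsubS hs).2
  apply le_antisymm
  · rw [Submodule.span_le]
    rintro v ⟨ψ, rfl⟩
    set p := Submodule.span ℝ
      ((fun ξ : Metric.sphere (0 : EuclideanSpace ℝ (Fin n)) 1 =>
        (ξ : EuclideanSpace ℝ (Fin n))) '' T) with hp
    show (∫ ξ, ψ ξ • (ξ : EuclideanSpace ℝ (Fin n)) ∂μ) ∈ (p : Set (EuclideanSpace ℝ (Fin n)))
    rw [SetLike.mem_coe, ← Submodule.orthogonal_orthogonal p, Submodule.mem_orthogonal]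
    intro u hu
    rw [← integral_inner (hint ψ) u]
    have hz : (fun ξ : Metric.sphere (0 : EuclideanSpace ℝ (Fin n)) 1 =>
        (inner ℝ u (ψ ξ • (ξ : EuclideanSpace ℝ (Fin n))) : ℝ)) =ᵐ[μ] 0 := by
      filter_upwards [hae] with ξ hξ
      have hξp : (ξ : EuclideanSpace ℝ (Fin n)) ∈ p := Submodule.subset_span ⟨ξ, hξ, rfl⟩
      have h0 : (inner ℝ ((ξ : EuclideanSpace ℝ (Fin n))) u : ℝ) =
          0 := (Submodule.mem_orthogonal p u).1 hu _ hξp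
      simp only [Pi.zero_apply]
      have h0' : (inner ℝ u ((ξ : EuclideanSpace ℝ (Fin n))) : ℝ) = 0 := by
        rw [real_inner_comm]; exact h0
      rw [inner_smul_right, h0', mul_zero]
    rw [integral_congr_ae hz]
    simp
  · rw [Submodule.span_le]
    rintro v ⟨ξ₀, hξ₀, rfl⟩
    set M := Submodule.span ℝ
      {v : EuclideanSpace ℝ (Fin n) |
        ∃ ψ : C(Metric.sphere (0 : EuclideanSpace ℝ (Fin n)) 1, ℝ),
          v = ∫ ξ, ψ ξ • (ξ : EuclideanSpace ℝ (Fin n)) ∂μ} with hM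
    have hMclosed : IsClosed (M : Set (EuclideanSpace ℝ (Fin n))) :=
      Submodule.closed_of_finiteDimensional M
    show (ξ₀ : EuclideanSpace ℝ (Fin n)) ∈ (M : Set (EuclideanSpace ℝ (Fin n)))
    rw [← hMclosed.closure_eq, Metric.mem_closure_iff]
    intro ε hε
    set δ := ε / 2 with hδdef
    have hδ : 0 < δ := by positivity
    set ψ : C(Metric.sphere (0 : EuclideanSpace ℝ (Fin n)) 1, ℝ) :=
      ⟨fun ξ => max 0 (1 - dist ξ ξ₀ / δ), by
        apply Continuous.max continuous_const
        exact continuous_const.sub ((continuous_id.dist continuous_const).div_const δ)⟩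
      with hψ
    have hψnn : ∀ ξ, 0 ≤ ψ ξ := fun ξ => le_max_left _ _
    set c := ∫ ξ, ψ ξ ∂μ with hc
    have hball : 0 < μ (Metric.ball ξ₀ (δ / 2)) :=
      hξ₀ _ Metric.isOpen_ball (Metric.mem_ball_self (by positivity))
    have hcpos : 0 < c := by
      have h1 : (1 / 2 : ℝ) * (μ (Metric.ball ξ₀ (δ / 2))).toReal ≤
          ∫ ξ in Metric.ball ξ₀ (δ / 2), ψ ξ ∂μ := by
        refine setIntegral_ge_of_const_le_real measurableSet_ball (measure_ne_top μ _)
          (fun ξ hξ => ?_) (hintR ψ).integrableOn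
        have hd : dist ξ ξ₀ < δ / 2 := Metric.mem_ball.1 hξ
        have hlt : dist ξ ξ₀ / δ < 1 / 2 := by
          rw [div_lt_iff₀ hδ]; linarith
        refine le_max_of_le_right ?_
        linarith
      have h2 : ∫ ξ in Metric.ball ξ₀ (δ / 2), ψ ξ ∂μ ≤ c :=
        setIntegral_le_integral (hintR ψ) (Filter.Eventually.of_forall hψnn)
      have h3 : 0 < (μ (Metric.ball ξ₀ (δ / 2))).toReal :=
        ENNReal.toReal_pos hball.ne' (measure_ne_top μ _)
      linarith
    have hvM : (∫ ξ, ψ ξ • (ξ : EuclideanSpace ℝ (Fin n)) ∂μ) ∈ M :=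
      Submodule.subset_span ⟨ψ, rfl⟩
    refine ⟨c⁻¹ • ∫ ξ, ψ ξ • (ξ : EuclideanSpace ℝ (Fin n)) ∂μ, M.smul_mem _ hvM, ?_⟩
    have key : ∀ ξ : Metric.sphere (0 : EuclideanSpace ℝ (Fin n)) 1,
        ‖ψ ξ • ((ξ₀ : EuclideanSpace ℝ (Fin n)) - (ξ : EuclideanSpace ℝ (Fin n)))‖ ≤
          δ * ψ ξ := by
      intro ξ
      rw [norm_smul, Real.norm_eq_abs, abs_of_nonneg (hψnn ξ)]
      have hdist : ‖(ξ₀ : EuclideanSpace ℝ (Fin n)) - (ξ : EuclideanSpace ℝ (Fin n))‖ =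
          dist ξ ξ₀ := by
        rw [← dist_eq_norm, Subtype.dist_eq, dist_comm]
      rw [hdist]
      rcases le_or_gt (dist ξ ξ₀) δ with h | h
      · calc ψ ξ * dist ξ ξ₀ ≤ ψ ξ * δ := mul_le_mul_of_nonneg_left h (hψnn ξ)
          _ = δ * ψ ξ := mul_comm _ _
      · have hz : ψ ξ = 0 := by
          apply max_eq_left
          have h1 : 1 ≤ dist ξ ξ₀ / δ := by
            rw [le_div_iff₀ hδ]; linarith
          linarith
        simp [hz]
    have hbound : ‖c • (ξ₀ : EuclideanSpace ℝ (Fin n)) -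
        ∫ ξ, ψ ξ • (ξ : EuclideanSpace ℝ (Fin n)) ∂μ‖ ≤ δ * c := by
      have hconst : c • (ξ₀ : EuclideanSpace ℝ (Fin n)) =
          ∫ ξ, ψ ξ • (ξ₀ : EuclideanSpace ℝ (Fin n)) ∂μ :=
        (integral_smul_const _ _).symm
      rw [hconst, ← integral_sub ((hintR ψ).smul_const _) (hint ψ)]
      have hsm : (fun ξ : Metric.sphere (0 : EuclideanSpace ℝ (Fin n)) 1 =>
          ψ ξ • (ξ₀ : EuclideanSpace ℝ (Fin n)) - ψ ξ • (ξ : EuclideanSpace ℝ (Fin n))) =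
          fun ξ => ψ ξ • ((ξ₀ : EuclideanSpace ℝ (Fin n)) - (ξ : EuclideanSpace ℝ (Fin n))) := by
        funext ξ; rw [smul_sub]
      rw [hsm]
      calc ‖∫ ξ, ψ ξ • ((ξ₀ : EuclideanSpace ℝ (Fin n)) - (ξ : EuclideanSpace ℝ (Fin n))) ∂μ‖
          ≤ ∫ ξ, ‖ψ ξ • ((ξ₀ : EuclideanSpace ℝ (Fin n)) - (ξ : EuclideanSpace ℝ (Fin n)))‖ ∂μ :=
            norm_integral_le_integral_norm _
        _ ≤ ∫ ξ, δ * ψ ξ ∂μ := by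
            refine integral_mono ?_ ((hintR ψ).const_mul δ) key
            have : Integrable (fun ξ : Metric.sphere (0 : EuclideanSpace ℝ (Fin n)) 1 =>
                ψ ξ • (ξ₀ : EuclideanSpace ℝ (Fin n)) - ψ ξ • (ξ : EuclideanSpace ℝ (Fin n))) μ :=
              ((hintR ψ).smul_const _).sub (hint ψ)
            exact (hsm ▸ this).norm
        _ = δ * c := by rw [integral_const_mul]
    have hne : c ≠ 0 := ne_of_gt hcpos
    rw [dist_eq_norm]
    have heq2 : (ξ₀ : EuclideanSpace ℝ (Fin n)) -
        c⁻¹ • ∫ ξ, ψ ξ • (ξ : EuclideanSpace ℝ (Fin n)) ∂μ =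
        c⁻¹ • (c • (ξ₀ : EuclideanSpace ℝ (Fin n)) -
          ∫ ξ, ψ ξ • (ξ : EuclideanSpace ℝ (Fin n)) ∂μ) := by
      rw [smul_sub, inv_smul_smul₀ hne]
    rw [heq2, norm_smul, Real.norm_eq_abs, abs_of_pos (inv_pos.2 hcpos)]
    calc c⁻¹ * ‖c • (ξ₀ : EuclideanSpace ℝ (Fin n)) -
          ∫ ξ, ψ ξ • (ξ : EuclideanSpace ℝ (Fin n)) ∂μ‖ ≤ c⁻¹ * (δ * c) :=
          mul_le_mul_of_nonneg_left hbound (le_of_lt (inv_pos.2 hcpos))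
      _ = δ := by field_simp
      _ < ε := by rw [hδdef]; linarith
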